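/- With the notation Obst_n(A) = A ∩ I_{n,A}, one has Obst_n(A) ⊆ Obst_{n−1}(A) for every n ≥ 2. -/

import Mathlib

open Finset

/-- The polynomial extension `A[ξ_{m,A}]` of `A` by central commuting indeterminates
`ξ_{i,a}` (`1 ≤ i ≤ m`, `a ∈ A`), realized as the monoid algebra of `A` over the free
commutative monoid on `Fin m × A`. -/
abbrev XiRing (A : Type*) [Ring A] (m : ℕ) : Type _ :=
  AddMonoidAlgebra A ((Fin m × A) →₀ ℕ)

/-- The indeterminate `ξ_{i,a}` in `A[ξ_{m,A}]`. -/
noncomputable def xi {A : Type*} [Ring A] {m : ℕ} (i : Fin m) (a : A) : XiRing A m :=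
  AddMonoidAlgebra.single (Finsupp.single (i, a) 1) 1

/-- The canonical embedding `A → A[ξ_{m,A}]`. -/
noncomputable def embA {A : Type*} [Ring A] (m : ℕ) : A →+* XiRing A m :=
  AddMonoidAlgebra.singleZeroRingHom

/-- The two-sided ideal `I_{m,A} ⊆ A[ξ_{m,A}]` generated by the elements
`a^m + ξ_{1,a} a^{m−1} + ⋯ + ξ_{m,a}` for `a ∈ A`. -/
noncomputable def IdealI (A : Type*) [Ring A] (m : ℕ) : TwoSidedIdeal (XiRing A m) :=
  TwoSidedIdeal.span {r : XiRing A m | ∃ a : A,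
    r = embA m (a ^ m) + ∑ i : Fin m, xi i a * embA m (a ^ (m - 1 - (i : ℕ)))}

/-- `single f 1` is central in `XiRing A m`. -/
lemma single_one_commute {A : Type*} [Ring A] {m : ℕ} (f : (Fin m × A) →₀ ℕ)
    (x : XiRing A m) : Commute (AddMonoidAlgebra.single f (1 : A)) x := by
  induction x using AddMonoidAlgebra.induction with
  | zero => exact Commute.zero_right _
  | single_add g b v _ _ ih =>
    refine Commute.add_right ?_ ih
    exact AddMonoidAlgebra.single_commute_single (add_comm f g) (Commute.one_left b)

/-- The target of each `ξ_{i,b}` under the transition map, as an element of the center. -/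
noncomputable def xiTarget {A : Type*} [Ring A] (m : ℕ) (p : Fin (m + 1) × A) :
    Subsemiring.center (XiRing A m) :=
  if h : (p.1 : ℕ) < m then
    ⟨xi ⟨p.1, h⟩ p.2, Subsemiring.mem_center_iff.2 fun x => ((single_one_commute _ x).symm : _)⟩
  else 0

/-- Monoid-hom part of the transition map. -/
noncomputable def phiG {A : Type*} [Ring A] (m : ℕ) :
    Multiplicative ((Fin (m + 1) × A) →₀ ℕ) →* Subsemiring.center (XiRing A m) where
  toFun f := (Multiplicative.toAdd f).prod fun p n => xiTarget m p ^ n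
  map_one' := by simp
  map_mul' f g :=
    Finsupp.prod_add_index' (fun p => pow_zero _) (fun p n k => pow_add _ _ _)

/-- Monoid hom into the ring itself. -/
noncomputable def phiG' {A : Type*} [Ring A] (m : ℕ) :
    Multiplicative ((Fin (m + 1) × A) →₀ ℕ) →* XiRing A m :=
  ((Subsemiring.center (XiRing A m)).subtype : _ →* _).comp (phiG m)

/-- The transition ring hom `A[ξ_{m+1,A}] → A[ξ_{m,A}]`. -/
noncomputable def phi {A : Type*} [Ring A] (m : ℕ) : XiRing A (m + 1) →+* XiRing A m :=
  AddMonoidAlgebra.liftNCRingHom (embA m) (phiG' m) fun x y => by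
    exact Subsemiring.mem_center_iff.1 (phiG m y).2 (embA m x)

lemma phi_embA {A : Type*} [Ring A] (m : ℕ) (a : A) : phi m (embA (m + 1) a) = embA m a := by
  have : phi m (AddMonoidAlgebra.single 0 a) =
      embA m a * phiG' m (Multiplicative.ofAdd (0 : (Fin (m+1) × A) →₀ ℕ)) :=
    AddMonoidAlgebra.liftNC_single _ _ _ _
  rw [show Multiplicative.ofAdd (0 : (Fin (m+1) × A) →₀ ℕ) = 1 from rfl, map_one, mul_one] at this
  exact this

lemma phi_xi {A : Type*} [Ring A] (m : ℕ) (i : Fin (m + 1)) (b : A) :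
    phi m (xi i b) = (xiTarget m (i, b) : XiRing A m) := by
  have h1 : phi m (AddMonoidAlgebra.single (Finsupp.single (i, b) 1) (1 : A)) =
      embA m 1 * phiG' m (Multiplicative.ofAdd (Finsupp.single (i, b) 1)) :=
    AddMonoidAlgebra.liftNC_single _ _ _ _
  rw [map_one, one_mul] at h1
  have h2 : phiG m (Multiplicative.ofAdd (Finsupp.single (i, b) 1)) = xiTarget m (i, b) :=
    (Finsupp.prod_single_index (a := ((i, b) : Fin (m + 1) × A)) (b := 1)
      (h := fun p n => xiTarget m p ^ n) (pow_zero _)).trans (pow_one _)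
  exact h1.trans
    (congrArg (fun z : Subsemiring.center (XiRing A m) => (z : XiRing A m)) h2)

/-- With `Obst_m(A) = A ∩ I_{m,A}`, one has `Obst_n(A) ⊆ Obst_{n−1}(A)` for every
`n ≥ 2` (writing `n = m + 1` with `m ≥ 1`): if an element `a ∈ A` lies in `I_{n,A}`
inside `A[ξ_{n,A}]`, then it lies in `I_{n−1,A}` inside `A[ξ_{n−1,A}]`. -/
theorem stmt_15 (A : Type*) [Ring A] (m : ℕ) (hm : 1 ≤ m) :
    ∀ a : A, embA (m + 1) a ∈ IdealI A (m + 1) → embA m a ∈ IdealI A m := by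
  intro a ha
  rw [IdealI, TwoSidedIdeal.mem_span_iff] at ha
  have key := ha ((IdealI A m).comap (phi m)) ?_
  · rwa [TwoSidedIdeal.mem_comap, phi_embA] at key
  rintro r ⟨b, rb⟩
  rw [SetLike.mem_coe, TwoSidedIdeal.mem_comap, rb]
  have hgen : (embA m (b ^ m) +
      ∑ i : Fin m, xi i b * embA m (b ^ (m - 1 - (i : ℕ)))) ∈ IdealI A m :=
    TwoSidedIdeal.subset_span ⟨b, rfl⟩
  have hmem := (IdealI A m).mul_mem_right _ (embA m b) hgen
  have hcalc : phi m (embA (m+1) (b ^ (m+1)) +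
      ∑ i : Fin (m+1), xi i b * embA (m+1) (b ^ (m + 1 - 1 - (i : ℕ)))) =
      (embA m (b ^ m) + ∑ i : Fin m, xi i b * embA m (b ^ (m - 1 - (i : ℕ)))) * embA m b := by
    rw [map_add, map_sum, phi_embA]
    rw [add_mul, Finset.sum_mul]
    congr 1
    · rw [← map_mul, ← pow_succ]
    · rw [Fin.sum_univ_castSucc]
      have hlast : phi m (xi (Fin.last m) b * embA (m+1) (b ^ (m + 1 - 1 - (Fin.last m : ℕ)))) = 0 := by
        rw [map_mul, phi_xi]
        have : xiTarget m ((Fin.last m), b) = 0 := by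
          unfold xiTarget
          simp [Fin.last]
        rw [this, ZeroMemClass.coe_zero, zero_mul]
      rw [hlast, add_zero]
      refine Finset.sum_congr rfl fun i _ => ?_
      rw [map_mul, phi_xi, phi_embA, mul_assoc, ← map_mul]
      have hcast : (xiTarget m ((Fin.castSucc i), b) : XiRing A m) = xi i b := by
        unfold xiTarget
        have hlt : ((Fin.castSucc i : Fin (m+1)) : ℕ) < m := i.isLt
        rw [dif_pos hlt]
        rfl
      rw [hcast]
      congr 2
      show b ^ (m + 1 - 1 - ((Fin.castSucc i : Fin (m+1)) : ℕ)) = b ^ (m - 1 - (i : ℕ)) * b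
      have : ((Fin.castSucc i : Fin (m+1)) : ℕ) = (i : ℕ) := rfl
      rw [this, ← pow_succ]
      congr 1
      have hi : (i : ℕ) < m := i.isLt
      omega
  rw [hcalc]
  exact hmem
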